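/- Let G = F₃ × F₃ where F₃ is the free group of rank 3, and let X be a finite set generating ℤ³ as a monoid. Then the word problem of ℤ³ with respect to X is not accepted by any deterministic G-automaton over X. -/

import Mathlib

/-- A monoid `M` has *unique left inverses* if whenever `b * a = 1 = c * a` we have `b = c`. -/
def UniqueLeftInverses (M : Type) [Monoid M] : Prop :=
  ∀ a b c : M, b * a = 1 → c * a = 1 → b = c

/-- The word problem of a group `H`, generated as a monoid by the image of `φ : X → H`,
is the set of words over `X` representing the identity of `H`. -/
def wordProblem {H : Type} [Group H] {X : Type} (φ : X → H) : Set (List X) :=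
  {w | (w.map φ).prod = 1}

/-- A deterministic `M`-automaton over the alphabet `X`: a finite directed graph with
a distinguished initial state, a set of terminal states, and edges labelled by pairs in
`M × X`, such that each state has at most one outgoing edge per letter of `X`. -/
structure DetMAutomaton (M : Type) [Monoid M] (X : Type) where
  State : Type
  [stateFintype : Fintype State]
  init : State
  terminal : Set State
  edge : State → M × X → State → Prop
  det : ∀ ⦃p : State⦄ ⦃x : X⦄ ⦃g h : M⦄ ⦃q r : State⦄,
      edge p (g, x) q → edge p (h, x) r → g = h ∧ q = r

namespace DetMAutomaton

variable {M : Type} [Monoid M] {X : Type}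

/-- `A.Path p m w q` means there is a path from `p` to `q` labelled `(m, w)`: the
`X`-components of its edge labels spell out `w` in order, and the `M`-components
multiply in order to `m`. -/
inductive Path (A : DetMAutomaton M X) : A.State → M → List X → A.State → Prop
  | nil (p : A.State) : Path A p 1 [] p
  | cons {p q r : A.State} {g h : M} {x : X} {w : List X} :
      A.edge p (g, x) q → Path A q h w r → Path A p (g * h) (x :: w) r

/-- The language accepted by a deterministic `M`-automaton: all words `w` such that some
path labelled `(1, w)` leads from the initial state to a terminal state. -/
def Lang (A : DetMAutomaton M X) : Set (List X) :=
  {w | ∃ q ∈ A.terminal, A.Path A.init 1 w q}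

/-- A deterministic `M`-automaton is *deterministic terminal state minimal* (DTSM) if no
deterministic `M`-automaton accepting the same language has strictly fewer terminal states. -/
def DTSM (A : DetMAutomaton M X) : Prop :=
  ∀ B : DetMAutomaton M X, B.Lang = A.Lang → Nat.card A.terminal ≤ Nat.card B.terminal

end DetMAutomaton

section IdemAux

private lemma idem_aux {St : Type} (f : St → St) (i j : ℕ) (hij : f^[i] = f^[j]) (h : i < j) :
    ∃ n : ℕ, 0 < n ∧ ∀ s, f^[n] (f^[n] s) = f^[n] s := by
  set p := j - i with hp
  have hp1 : 0 < p := by omega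
  have hj : j = i + p := by omega
  have step : ∀ k, i ≤ k → f^[k + p] = f^[k] := by
    intro k hk
    obtain ⟨t, rfl⟩ := Nat.exists_eq_add_of_le hk
    calc f^[i + t + p] = f^[t] ∘ f^[i + p] := by
          rw [← Function.iterate_add]; ring_nf
      _ = f^[t] ∘ f^[i] := by rw [← hj, ← hij]
      _ = f^[i + t] := by rw [← Function.iterate_add]; ring_nf
  have mult : ∀ (t k : ℕ), i ≤ k → f^[k + t * p] = f^[k] := by
    intro t
    induction t with
    | zero => intro k hk; simp
    | succ t ih =>
      intro k hk
      have : k + (t + 1) * p = (k + p) + t * p := by ring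
      rw [this, ih _ (by omega), step _ hk]
  refine ⟨(i + 1) * p, by positivity, fun s => ?_⟩
  have : (i + 1) * p + (i + 1) * p = (i + 1) * p + (i + 1) * p := rfl
  have h2 : f^[(i + 1) * p + (i + 1) * p] = f^[(i + 1) * p] :=
    mult (i + 1) ((i + 1) * p) (by nlinarith)
  calc f^[(i + 1) * p] (f^[(i + 1) * p] s) = f^[(i + 1) * p + (i + 1) * p] s := by
        rw [Function.iterate_add_apply]
    _ = f^[(i + 1) * p] s := by rw [h2]

end IdemAux

section AutoLemmas

variable {M X : Type} [Group M] (A : DetMAutomaton M X)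

open DetMAutomaton

lemma path_unique : ∀ {w : List X} {p q r : A.State} {g h : M},
    A.Path p g w q → A.Path p h w r → g = h ∧ q = r := by
  intro w
  induction w with
  | nil =>
    intro p q r g h h1 h2
    cases h1; cases h2; exact ⟨rfl, rfl⟩
  | cons x w ih =>
    intro p q r g h h1 h2
    cases h1 with
    | cons e1 p1 =>
      cases h2 with
      | cons e2 p2 =>
        obtain ⟨hg, hq⟩ := A.det e1 e2
        subst hg; subst hq
        obtain ⟨hg', hq'⟩ := ih p1 p2
        exact ⟨by rw [hg'], hq'⟩

lemma path_append {u v : List X} {p q r : A.State} {g h : M}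
    (h1 : A.Path p g u q) (h2 : A.Path q h v r) : A.Path p (g * h) (u ++ v) r := by
  induction h1 with
  | nil p => simpa using h2
  | cons e p1 ih =>
    rename_i pp qq rr gg hh xx ww
    rw [mul_assoc]
    exact Path.cons e (ih h2)

lemma path_split : ∀ {u v : List X} {p r : A.State} {g : M},
    A.Path p g (u ++ v) r → ∃ (q : A.State) (g₁ g₂ : M),
      g = g₁ * g₂ ∧ A.Path p g₁ u q ∧ A.Path q g₂ v r := by
  intro u
  induction u with
  | nil =>
    intro v p r g hp
    exact ⟨p, 1, g, by simp, Path.nil p, by simpa using hp⟩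
  | cons x u ih =>
    intro v p r g hp
    cases hp with
    | cons e p1 =>
      obtain ⟨q, g₁, g₂, rfl, h1, h2⟩ := ih p1
      exact ⟨q, _ * g₁, g₂, by rw [mul_assoc], Path.cons e h1, h2⟩

open scoped Classical in
/-- One deterministic step, via choice; junk value `(1, q)` if no edge. -/
noncomputable def stepP (q : A.State) (x : X) : M × A.State :=
  if h : ∃ p : M × A.State, A.edge q (p.1, x) p.2 then h.choose else (1, q)

noncomputable def runS : A.State → List X → A.State
  | q, [] => q
  | q, x :: w => runS (stepP A q x).2 w

noncomputable def runG : A.State → List X → M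
  | _, [] => 1
  | q, x :: w => (stepP A q x).1 * runG (stepP A q x).2 w

lemma runS_append (q : A.State) (u v : List X) :
    runS A q (u ++ v) = runS A (runS A q u) v := by
  induction u generalizing q with
  | nil => rfl
  | cons x u ih => simp [runS, ih]

lemma runG_append (q : A.State) (u v : List X) :
    runG A q (u ++ v) = runG A q u * runG A (runS A q u) v := by
  induction u generalizing q with
  | nil => simp [runG, runS]
  | cons x u ih => simp [runG, runS, ih, mul_assoc]

lemma path_run : ∀ {w : List X} {q : A.State},
    (∃ (g : M) (r : A.State), A.Path q g w r) → A.Path q (runG A q w) w (runS A q w) := by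
  intro w
  induction w with
  | nil => intro q _; exact Path.nil q
  | cons x w ih =>
    intro q hex
    obtain ⟨g, r, hp⟩ := hex
    cases hp with
    | cons e p1 =>
      rename_i pp qq gg hh
      have hed : ∃ p : M × A.State, A.edge q (p.1, x) p.2 := ⟨(_, _), e⟩
      have hch := hed.choose_spec
      have hstep : stepP A q x = hed.choose := dif_pos hed
      obtain ⟨hg, hq⟩ := A.det hch e
      have h2 : A.Path (stepP A q x).2 (runG A (stepP A q x).2 w) w (runS A (stepP A q x).2 w) := by
        apply ih
        rw [hstep, hq]
        exact ⟨_, _, p1⟩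
      simpa [runS, runG] using Path.cons (by rw [hstep]; exact hch) h2

section WP

variable {H : Type} [CommGroup H] (φ : X → H)
  (hgen : ∀ h : H, ∃ w : List X, (w.map φ).prod = h)
  (hL : A.Lang = wordProblem φ)

lemma exists_path_init (hgen : ∀ h : H, ∃ w : List X, (w.map φ).prod = h)
    (hL : A.Lang = wordProblem φ) (w : List X) : ∃ (g : M) (r : A.State), A.Path A.init g w r := by
  obtain ⟨z, hz⟩ := hgen ((w.map φ).prod)⁻¹
  have hmem : (w ++ z) ∈ wordProblem φ := by
    simp [wordProblem, hz]
  rw [← hL] at hmem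
  obtain ⟨t, _, hp⟩ := hmem
  obtain ⟨q, g₁, g₂, _, h1, _⟩ := path_split A hp
  exact ⟨g₁, q, h1⟩

lemma path_init (hgen : ∀ h : H, ∃ w : List X, (w.map φ).prod = h)
    (hL : A.Lang = wordProblem φ) (w : List X) : A.Path A.init (runG A A.init w) w (runS A A.init w) :=
  path_run A (exists_path_init A φ hgen hL w)

lemma mem_iff (hgen : ∀ h : H, ∃ w : List X, (w.map φ).prod = h)
    (hL : A.Lang = wordProblem φ) (w : List X) :
    w ∈ wordProblem φ ↔ runG A A.init w = 1 ∧ runS A A.init w ∈ A.terminal := by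
  constructor
  · intro hw
    rw [← hL] at hw
    obtain ⟨t, ht, hp⟩ := hw
    obtain ⟨hg, hq⟩ := path_unique A (path_init A φ hgen hL w) hp
    exact ⟨hg, hq ▸ ht⟩
  · rintro ⟨hg, ht⟩
    rw [← hL]
    exact ⟨runS A A.init w, ht, hg ▸ path_init A φ hgen hL w⟩

lemma run_welldef (hgen : ∀ h : H, ∃ w : List X, (w.map φ).prod = h)
    (hL : A.Lang = wordProblem φ) {u u' : List X} (hv : (u.map φ).prod = (u'.map φ).prod)
    (hs : runS A A.init u = runS A A.init u') : runG A A.init u = runG A A.init u' := by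
  obtain ⟨z, hz⟩ := hgen ((u.map φ).prod)⁻¹
  have h1 : (u ++ z) ∈ wordProblem φ := by simp [wordProblem, hz]
  have h2 : (u' ++ z) ∈ wordProblem φ := by simp [wordProblem, hz, ← hv]
  have g1 := ((mem_iff A φ hgen hL _).1 h1).1
  have g2 := ((mem_iff A φ hgen hL _).1 h2).1
  rw [runG_append] at g1 g2
  rw [hs] at g1
  exact mul_right_cancel (g1.trans g2.symm)

lemma run_inj (hgen : ∀ h : H, ∃ w : List X, (w.map φ).prod = h)
    (hL : A.Lang = wordProblem φ) {u u' : List X} (hs : runS A A.init u = runS A A.init u')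
    (hg : runG A A.init u = runG A A.init u') : (u.map φ).prod = (u'.map φ).prod := by
  obtain ⟨z, hz⟩ := hgen ((u.map φ).prod)⁻¹
  have h1 : (u ++ z) ∈ wordProblem φ := by simp [wordProblem, hz]
  have hm := (mem_iff A φ hgen hL _).1 h1
  have h2 : (u' ++ z) ∈ wordProblem φ := by
    rw [mem_iff A φ hgen hL]
    rw [runG_append, runS_append] at hm
    rw [runG_append, runS_append, ← hs, ← hg]
    exact hm
  have e1 : (u.map φ).prod * (z.map φ).prod = 1 := by
    have := h1; simpa [wordProblem] using this
  have e2 : (u'.map φ).prod * (z.map φ).prod = 1 := by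
    have := h2; simpa [wordProblem] using this
  exact mul_right_cancel (e1.trans e2.symm)

end WP

section Rep

variable (Xa : Type)

/-- `n`-fold concatenation of a word. -/
def repw : ℕ → List Xa → List Xa
  | 0, _ => []
  | n + 1, w => w ++ repw n w

end Rep

lemma run_repw (q : A.State) (w : List X) (n : ℕ) :
    runS A q (repw X n w) = (fun s => runS A s w)^[n] q := by
  induction n generalizing q with
  | zero => rfl
  | succ n ih =>
    rw [repw, runS_append, ih, Function.iterate_succ_apply]

lemma prod_repw {H : Type} [CommGroup H] (φ : X → H) (n : ℕ) (w : List X) :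
    ((repw X n w).map φ).prod = ((w.map φ).prod) ^ n := by
  induction n with
  | zero => simp [repw]
  | succ n ih => simp [repw, ih, pow_succ, mul_comm]

lemma loop_runS_repw {q : A.State} {l : List X} (hl : runS A q l = q) (n : ℕ) :
    runS A q (repw X n l) = q := by
  induction n with
  | zero => rfl
  | succ n ih => rw [repw, runS_append, hl, ih]

lemma loop_runG_repw {q : A.State} {l : List X} (hl : runS A q l = q) (n : ℕ) :
    runG A q (repw X n l) = (runG A q l) ^ n := by
  induction n with
  | zero => simp [repw, runG]
  | succ n ih => rw [repw, runG_append, hl, ih, pow_succ']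

lemma exists_idem' {St : Type} [Finite St] (f : St → St) :
    ∃ n : ℕ, 0 < n ∧ ∀ s, f^[n] (f^[n] s) = f^[n] s := by
  obtain ⟨i, j, hne, hij⟩ := Finite.exists_ne_map_eq_of_infinite (fun n : ℕ => f^[n])
  rcases hne.lt_or_gt with h | h
  · exact idem_aux f i j hij h
  · exact idem_aux f j i hij.symm h

end AutoLemmas


lemma dep2 (a b c : ℤ × ℤ) :
    ∃ i j k : ℤ, ¬(i = 0 ∧ j = 0 ∧ k = 0) ∧
      i * a.1 + j * b.1 + k * c.1 = 0 ∧ i * a.2 + j * b.2 + k * c.2 = 0 := by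
  obtain ⟨a1, a2⟩ := a
  obtain ⟨b1, b2⟩ := b
  obtain ⟨c1, c2⟩ := c
  simp only
  by_cases h1 : b1 * c2 - b2 * c1 = 0 ∧ -(a1 * c2 - a2 * c1) = 0 ∧ a1 * b2 - a2 * b1 = 0
  · obtain ⟨m1, m2, m3⟩ := h1
    by_cases ha : a1 = 0 ∧ a2 = 0
    · exact ⟨1, 0, 0, by simp, by simp [ha.1], by simp [ha.2]⟩
    · rcases (not_and_or.1 ha) with ha1 | ha2
      · exact ⟨b1, -a1, 0, fun h => ha1 (neg_eq_zero.1 h.2.1), by ring, by linarith [m3]⟩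
      · exact ⟨b2, -a2, 0, fun h => ha2 (neg_eq_zero.1 h.2.1), by linarith [m3], by ring⟩
  · refine ⟨b1 * c2 - b2 * c1, -(a1 * c2 - a2 * c1), a1 * b2 - a2 * b1, h1, by ring, by ring⟩

lemma closure_comm {G : Type*} [Group G] {s : Set G}
    (h : ∀ a ∈ s, ∀ b ∈ s, a * b = b * a) :
    ∀ a ∈ Subgroup.closure s, ∀ b ∈ Subgroup.closure s, a * b = b * a := by
  have h1 : Subgroup.closure s ≤ Subgroup.centralizer s := by
    rw [Subgroup.closure_le]
    intro b hb
    exact Subgroup.mem_centralizer_iff.2 fun a ha => h a ha b hb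
  have h2 : Subgroup.closure s ≤ Subgroup.centralizer (Subgroup.closure s : Set G) := by
    rw [Subgroup.closure_le]
    intro a ha
    exact Subgroup.mem_centralizer_iff.2 fun b hb => ((Subgroup.mem_centralizer_iff.1 (h1 hb)) a ha).symm
  intro a ha b hb
  exact (Subgroup.mem_centralizer_iff.1 (h2 hb)) a ha

lemma free_comm_cyclic {K : Type} [Group K] [IsFreeGroup K]
    (hc : ∀ a b : K, a * b = b * a) :
    ∃ ψ : K →* Multiplicative ℤ, Function.Injective ψ := by
  classical
  have hsub : Subsingleton (IsFreeGroup.Generators K) := by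
    by_contra hns
    rw [not_subsingleton_iff_nontrivial] at hns
    obtain ⟨s, t, hst⟩ := hns
    set σ₁ : Equiv.Perm (Fin 3) := Equiv.swap 0 1
    set σ₂ : Equiv.Perm (Fin 3) := Equiv.swap 1 2
    set f := IsFreeGroup.lift (fun u : IsFreeGroup.Generators K => if u = s then σ₁ else σ₂)
    have h1 : f (IsFreeGroup.of s) = σ₁ := by simp [f]
    have h2 : f (IsFreeGroup.of t) = σ₂ := by
      show IsFreeGroup.lift _ _ = _
      rw [IsFreeGroup.lift_of, if_neg (Ne.symm hst)]
    have := congrArg f (hc (IsFreeGroup.of s) (IsFreeGroup.of t))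
    rw [map_mul, map_mul, h1, h2] at this
    have : σ₁ * σ₂ = σ₂ * σ₁ := this
    revert this
    decide
  set e := IsFreeGroup.toFreeGroup K with he
  rcases isEmpty_or_nonempty (IsFreeGroup.Generators K) with hemp | ⟨⟨s₀⟩⟩
  · refine ⟨1, fun a b _ => ?_⟩
    have key : ∀ x : FreeGroup (IsFreeGroup.Generators K), x = 1 := by
      intro x
      induction x using FreeGroup.induction_on with
      | C1 => rfl
      | of u => exact (IsEmpty.false u).elim
      | inv_of u hu => rw [hu]; simp
      | mul u v hu hv => rw [hu, hv]; simp
    have : e a = e b := by rw [key (e a), key (e b)]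
    exact e.injective this
  · have key : ∀ x : FreeGroup (IsFreeGroup.Generators K), ∃ n : ℤ, x = FreeGroup.of s₀ ^ n := by
      intro x
      induction x using FreeGroup.induction_on with
      | C1 => exact ⟨0, by simp⟩
      | of u => exact ⟨1, by rw [Subsingleton.elim u s₀, zpow_one]⟩
      | inv_of u hu =>
        obtain ⟨n, hn⟩ := hu
        exact ⟨-n, by rw [hn, ← zpow_neg]⟩
      | mul u v hu hv =>
        obtain ⟨n, hn⟩ := hu
        obtain ⟨m, hm⟩ := hv
        exact ⟨n + m, by rw [hn, hm, zpow_add]⟩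
    have keyK : ∀ g : K, ∃ n : ℤ, g = (e.symm (FreeGroup.of s₀)) ^ n := by
      intro g
      obtain ⟨n, hn⟩ := key (e g)
      exact ⟨n, by rw [← e.symm_apply_apply g, hn, map_zpow]⟩
    refine ⟨IsFreeGroup.lift (fun _ => Multiplicative.ofAdd (1 : ℤ)), ?_⟩
    intro a b hab
    obtain ⟨n, rfl⟩ := keyK a
    obtain ⟨m, rfl⟩ := keyK b
    have hof : e.symm (FreeGroup.of s₀) = IsFreeGroup.of s₀ := rfl
    rw [hof, map_zpow, map_zpow, IsFreeGroup.lift_of] at hab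
    have : (n : ℤ) = m := by
      have := congrArg Multiplicative.toAdd hab
      simpa using this
    rw [this]

lemma part2 (g₀ g₁ g₂ g₃ : FreeGroup (Fin 3) × FreeGroup (Fin 3))
    (c01 : Commute g₀ g₁) (c02 : Commute g₀ g₂) (c03 : Commute g₀ g₃)
    (c12 : Commute g₁ g₂) (c13 : Commute g₁ g₃) (c23 : Commute g₂ g₃) :
    ∃ n n' : Fin 3 → ℕ, n ≠ n' ∧
      g₁ ^ n 0 * (g₂ ^ n 1 * (g₃ ^ n 2 * g₀ ^ (n' 0 + (n' 1 + n' 2)))) =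
      g₀ ^ (n 0 + (n 1 + n 2)) * (g₁ ^ n' 0 * (g₂ ^ n' 1 * g₃ ^ n' 2)) := by
  have pc : ∀ u v : FreeGroup (Fin 3) × FreeGroup (Fin 3), Commute u v →
      Commute u.1 v.1 ∧ Commute u.2 v.2 :=
    fun u v h => ⟨congrArg Prod.fst h, congrArg Prod.snd h⟩
  set s₁ : Set (FreeGroup (Fin 3)) := {g₀.1, g₁.1, g₂.1, g₃.1} with hs₁
  set s₂ : Set (FreeGroup (Fin 3)) := {g₀.2, g₁.2, g₂.2, g₃.2} with hs₂
  have L₁ : ∀ a ∈ s₁, ∀ b ∈ s₁, a * b = b * a := by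
    intro a ha b hb
    simp only [hs₁, Set.mem_insert_iff, Set.mem_singleton_iff] at ha hb
    rcases ha with rfl|rfl|rfl|rfl <;> rcases hb with rfl|rfl|rfl|rfl <;>
      first
        | rfl
        | exact (pc _ _ c01).1 | exact ((pc _ _ c01).1).symm
        | exact (pc _ _ c02).1 | exact ((pc _ _ c02).1).symm
        | exact (pc _ _ c03).1 | exact ((pc _ _ c03).1).symm
        | exact (pc _ _ c12).1 | exact ((pc _ _ c12).1).symm
        | exact (pc _ _ c13).1 | exact ((pc _ _ c13).1).symm
        | exact (pc _ _ c23).1 | exact ((pc _ _ c23).1).symm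
  have L₂ : ∀ a ∈ s₂, ∀ b ∈ s₂, a * b = b * a := by
    intro a ha b hb
    simp only [hs₂, Set.mem_insert_iff, Set.mem_singleton_iff] at ha hb
    rcases ha with rfl|rfl|rfl|rfl <;> rcases hb with rfl|rfl|rfl|rfl <;>
      first
        | rfl
        | exact (pc _ _ c01).2 | exact ((pc _ _ c01).2).symm
        | exact (pc _ _ c02).2 | exact ((pc _ _ c02).2).symm
        | exact (pc _ _ c03).2 | exact ((pc _ _ c03).2).symm
        | exact (pc _ _ c12).2 | exact ((pc _ _ c12).2).symm
        | exact (pc _ _ c13).2 | exact ((pc _ _ c13).2).symm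
        | exact (pc _ _ c23).2 | exact ((pc _ _ c23).2).symm
  set H₁ := Subgroup.closure s₁
  set H₂ := Subgroup.closure s₂
  have hc1 : ∀ a b : ↥H₁, a * b = b * a := by
    intro a b
    exact Subtype.ext (closure_comm L₁ a.1 a.2 b.1 b.2)
  have hc2 : ∀ a b : ↥H₂, a * b = b * a := by
    intro a b
    exact Subtype.ext (closure_comm L₂ a.1 a.2 b.1 b.2)
  obtain ⟨ψ₁, hψ₁⟩ := free_comm_cyclic hc1
  obtain ⟨ψ₂, hψ₂⟩ := free_comm_cyclic hc2
  have m₁ : ∀ u ∈ s₁, u ∈ H₁ := fun u hu => Subgroup.subset_closure hu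
  have m₂ : ∀ u ∈ s₂, u ∈ H₂ := fun u hu => Subgroup.subset_closure hu
  set X0 : ↥H₁ := ⟨g₀.1, m₁ _ (by simp [hs₁])⟩
  set X1 : ↥H₁ := ⟨g₁.1, m₁ _ (by simp [hs₁])⟩
  set X2 : ↥H₁ := ⟨g₂.1, m₁ _ (by simp [hs₁])⟩
  set X3 : ↥H₁ := ⟨g₃.1, m₁ _ (by simp [hs₁])⟩
  set Y0 : ↥H₂ := ⟨g₀.2, m₂ _ (by simp [hs₂])⟩
  set Y1 : ↥H₂ := ⟨g₁.2, m₂ _ (by simp [hs₂])⟩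
  set Y2 : ↥H₂ := ⟨g₂.2, m₂ _ (by simp [hs₂])⟩
  set Y3 : ↥H₂ := ⟨g₃.2, m₂ _ (by simp [hs₂])⟩
  set p0 := Multiplicative.toAdd (ψ₁ X0)
  set p1 := Multiplicative.toAdd (ψ₁ X1)
  set p2 := Multiplicative.toAdd (ψ₁ X2)
  set p3 := Multiplicative.toAdd (ψ₁ X3)
  set q0 := Multiplicative.toAdd (ψ₂ Y0)
  set q1 := Multiplicative.toAdd (ψ₂ Y1)
  set q2 := Multiplicative.toAdd (ψ₂ Y2)
  set q3 := Multiplicative.toAdd (ψ₂ Y3)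
  obtain ⟨i, j, k, hne0, e1, e2⟩ := dep2 (p1 - p0, q1 - q0) (p2 - p0, q2 - q0) (p3 - p0, q3 - q0)
  refine ⟨![i.toNat, j.toNat, k.toNat], ![(-i).toNat, (-j).toNat, (-k).toNat], ?_, ?_⟩
  · intro h
    apply hne0
    have h0 := congrFun h 0
    have h1 := congrFun h 1
    have h2 := congrFun h 2
    simp only [Matrix.cons_val_zero, Matrix.cons_val_one, Matrix.head_cons,
      Matrix.cons_val_two, Matrix.tail_cons] at h0 h1 h2
    omega
  · have ti : (i.toNat : ℤ) = i + ((-i).toNat : ℤ) := by omega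
    have tj : (j.toNat : ℤ) = j + ((-j).toNat : ℤ) := by omega
    have tk : (k.toNat : ℤ) = k + ((-k).toNat : ℤ) := by omega
    simp only [Matrix.cons_val_zero, Matrix.cons_val_one, Matrix.head_cons,
      Matrix.cons_val_two, Matrix.tail_cons]
    have key1 : X1 ^ i.toNat * (X2 ^ j.toNat * (X3 ^ k.toNat *
        X0 ^ ((-i).toNat + ((-j).toNat + (-k).toNat)))) =
        X0 ^ (i.toNat + (j.toNat + k.toNat)) *
        (X1 ^ (-i).toNat * (X2 ^ (-j).toNat * X3 ^ (-k).toNat)) := by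
      apply hψ₁
      apply Multiplicative.toAdd.injective
      simp only [map_mul, map_pow, toAdd_mul, toAdd_pow,
        nsmul_eq_mul]
      push_cast
      linear_combination e1 + (p1 - p0) * ti + (p2 - p0) * tj + (p3 - p0) * tk
    have key2 : Y1 ^ i.toNat * (Y2 ^ j.toNat * (Y3 ^ k.toNat *
        Y0 ^ ((-i).toNat + ((-j).toNat + (-k).toNat)))) =
        Y0 ^ (i.toNat + (j.toNat + k.toNat)) *
        (Y1 ^ (-i).toNat * (Y2 ^ (-j).toNat * Y3 ^ (-k).toNat)) := by
      apply hψ₂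
      apply Multiplicative.toAdd.injective
      simp only [map_mul, map_pow, toAdd_mul, toAdd_pow,
        nsmul_eq_mul]
      push_cast
      linear_combination e2 + (q1 - q0) * ti + (q2 - q0) * tj + (q3 - q0) * tk
    have k1 := congrArg (Subtype.val) key1
    have k2 := congrArg (Subtype.val) key2
    push_cast at k1 k2
    exact Prod.ext k1 k2


/-- The word problem of `ℤ³` (with respect to any finite monoid generating set) is not
accepted by any deterministic `(F₃ × F₃)`-automaton. -/
theorem wordProblem_Z3_not_det_F3xF3_automaton
    {X : Type} [Fintype X] (φ : X → Multiplicative (Fin 3 → ℤ))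
    (hgen : ∀ h : Multiplicative (Fin 3 → ℤ), ∃ w : List X, (w.map φ).prod = h) :
    ¬ ∃ A : DetMAutomaton (FreeGroup (Fin 3) × FreeGroup (Fin 3)) X,
        A.Lang = wordProblem φ := by
  
  rintro ⟨A, hL⟩
  haveI := A.stateFintype
  obtain ⟨wA, hwA⟩ := hgen (Multiplicative.ofAdd (Pi.single 0 1))
  obtain ⟨wB, hwB⟩ := hgen (Multiplicative.ofAdd (Pi.single 1 1))
  obtain ⟨wC, hwC⟩ := hgen (Multiplicative.ofAdd (Pi.single 2 1))
  obtain ⟨α, hα1, hα⟩ := exists_idem' (fun s => runS A s wA)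
  obtain ⟨β, hβ1, hβ⟩ := exists_idem' (fun s => runS A s wB)
  obtain ⟨γ, hγ1, hγ⟩ := exists_idem' (fun s => runS A s wC)
  set Aα := repw X α wA with hAα
  set Bβ := repw X β wB with hBβ
  set Cγ := repw X γ wC with hCγ
  have PA : ∀ s : A.State, runS A (runS A s Aα) Aα = runS A s Aα := by
    intro s; rw [hAα, run_repw, run_repw]; exact hα s
  have PB : ∀ s : A.State, runS A (runS A s Bβ) Bβ = runS A s Bβ := by
    intro s; rw [hBβ, run_repw, run_repw]; exact hβ s
  have PC : ∀ s : A.State, runS A (runS A s Cγ) Cγ = runS A s Cγ := by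
    intro s; rw [hCγ, run_repw, run_repw]; exact hγ s
  set D := Aα ++ (Bβ ++ Cγ) with hD
  obtain ⟨m, hm1, hmI⟩ := exists_idem' (fun s => runS A s D)
  obtain ⟨m', rfl⟩ : ∃ m', m = m' + 1 := ⟨m - 1, by omega⟩
  set E := repw X (m' + 1) D with hEdef
  have PE : ∀ s : A.State, runS A (runS A s E) E = runS A s E := by
    intro s; rw [hEdef, run_repw, run_repw]; exact hmI s
  set q := runS A A.init E with hq
  have loopE : runS A q E = q := PE A.init
  have hE' : E = Aα ++ (Bβ ++ (Cγ ++ repw X m' D)) := by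
    rw [hEdef]
    show D ++ repw X m' D = _
    rw [hD]
    simp [List.append_assoc]
  set Ea := Aα ++ E with hEa'
  set Eb := Aα ++ (Bβ ++ (Bβ ++ (Cγ ++ repw X m' D))) with hEb'
  set Ec := Aα ++ (Bβ ++ (Cγ ++ (Cγ ++ repw X m' D))) with hEc'
  have hEa : ∀ s, runS A s Ea = runS A s E := by
    intro s
    rw [hEa', hE']
    simp only [runS_append]
    rw [PA]
  have hEb : ∀ s, runS A s Eb = runS A s E := by
    intro s
    rw [hEb', hE']
    simp only [runS_append]
    rw [PB]
  have hEc : ∀ s, runS A s Ec = runS A s E := by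
    intro s
    rw [hEc', hE']
    simp only [runS_append]
    rw [PC]
  have lqEa : runS A q Ea = q := (hEa q).trans loopE
  have lqEb : runS A q Eb = q := (hEb q).trans loopE
  have lqEc : runS A q Ec = q := (hEc q).trans loopE
  -- well-definedness and injectivity for loops at q
  have wd : ∀ l l' : List X, runS A q l = q → runS A q l' = q →
      (l.map φ).prod = (l'.map φ).prod → runG A q l = runG A q l' := by
    intro l l' h h' hv
    have hs : runS A A.init (E ++ l) = runS A A.init (E ++ l') := by
      rw [runS_append, runS_append, ← hq, h, h']
    have hv2 : ((E ++ l).map φ).prod = ((E ++ l').map φ).prod := by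
      simp only [List.map_append, List.prod_append, hv]
    have h1 := run_welldef A φ hgen hL hv2 hs
    rw [runG_append, runG_append, ← hq] at h1
    exact mul_left_cancel h1
  have inj : ∀ l l' : List X, runS A q l = q → runS A q l' = q →
      runG A q l = runG A q l' → (l.map φ).prod = (l'.map φ).prod := by
    intro l l' h h' hg
    have hs : runS A A.init (E ++ l) = runS A A.init (E ++ l') := by
      rw [runS_append, runS_append, ← hq, h, h']
    have hg2 : runG A A.init (E ++ l) = runG A A.init (E ++ l') := by
      rw [runG_append, runG_append, ← hq, hg]
    have h1 := run_inj A φ hgen hL hs hg2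
    simp only [List.map_append, List.prod_append] at h1
    exact mul_left_cancel h1
  have com : ∀ l l' : List X, runS A q l = q → runS A q l' = q →
      Commute (runG A q l) (runG A q l') := by
    intro l l' h h'
    have h1 := wd (l ++ l') (l' ++ l)
      (by rw [runS_append, h, h']) (by rw [runS_append, h', h])
      (by simp only [List.map_append, List.prod_append]; exact mul_comm _ _)
    rw [runG_append, runG_append, h, h'] at h1
    exact h1
  set g0 := runG A q E
  set g1 := runG A q Ea
  set g2 := runG A q Eb
  set g3 := runG A q Ec
  obtain ⟨n, n', hnn, heq⟩ := part2 g0 g1 g2 g3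
    (com E Ea loopE lqEa) (com E Eb loopE lqEb) (com E Ec loopE lqEc)
    (com Ea Eb lqEa lqEb) (com Ea Ec lqEa lqEc) (com Eb Ec lqEb lqEc)
  set W₁ := repw X (n 0) Ea ++ (repw X (n 1) Eb ++ (repw X (n 2) Ec ++
    repw X (n' 0 + (n' 1 + n' 2)) E)) with hW₁
  set W₂ := repw X (n 0 + (n 1 + n 2)) E ++ (repw X (n' 0) Ea ++ (repw X (n' 1) Eb ++
    repw X (n' 2) Ec)) with hW₂
  have lW₁ : runS A q W₁ = q := by
    rw [hW₁]
    simp only [runS_append, loop_runS_repw A lqEa, loop_runS_repw A lqEb,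
      loop_runS_repw A lqEc, loop_runS_repw A loopE]
  have lW₂ : runS A q W₂ = q := by
    rw [hW₂]
    simp only [runS_append, loop_runS_repw A lqEa, loop_runS_repw A lqEb,
      loop_runS_repw A lqEc, loop_runS_repw A loopE]
  have gW : runG A q W₁ = runG A q W₂ := by
    rw [hW₁, hW₂]
    simp only [runG_append, runS_append, loop_runS_repw A lqEa, loop_runS_repw A lqEb,
      loop_runS_repw A lqEc, loop_runS_repw A loopE, loop_runG_repw A lqEa,
      loop_runG_repw A lqEb, loop_runG_repw A lqEc, loop_runG_repw A loopE]
    exact heq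
  have hval := inj W₁ W₂ lW₁ lW₂ gW
  -- compute the H-values
  have vEa : ((Ea.map φ).prod) = (Multiplicative.ofAdd (Pi.single 0 1)) ^ α * (E.map φ).prod := by
    rw [hEa']
    simp only [List.map_append, List.prod_append, hAα, prod_repw, hwA]
  have vEb : ((Eb.map φ).prod) = (Multiplicative.ofAdd (Pi.single 1 1)) ^ β * (E.map φ).prod := by
    rw [hEb', hE']
    simp only [List.map_append, List.prod_append, hBβ, prod_repw, hwB]
    simp [mul_comm, mul_left_comm, mul_assoc]
  have vEc : ((Ec.map φ).prod) = (Multiplicative.ofAdd (Pi.single 2 1)) ^ γ * (E.map φ).prod := by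
    rw [hEc', hE']
    simp only [List.map_append, List.prod_append, hCγ, prod_repw, hwC]
    simp [mul_comm, mul_left_comm, mul_assoc]
  rw [hW₁, hW₂] at hval
  simp only [List.map_append, List.prod_append, prod_repw, vEa, vEb, vEc] at hval
  have coord : ∀ t : Fin 3, ∀ l : List X,
      Multiplicative.toAdd ((l.map φ).prod) t = Multiplicative.toAdd ((l.map φ).prod) t :=
    fun _ _ => rfl
  have h0 := congrFun (congrArg Multiplicative.toAdd hval) 0
  have h1 := congrFun (congrArg Multiplicative.toAdd hval) 1
  have h2 := congrFun (congrArg Multiplicative.toAdd hval) 2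
  have s01 : (Pi.single (0 : Fin 3) (1 : ℤ) : Fin 3 → ℤ) 1 = 0 := by simp [Pi.single_apply]
  have s02 : (Pi.single (0 : Fin 3) (1 : ℤ) : Fin 3 → ℤ) 2 = 0 := by simp [Pi.single_apply]
  have s10 : (Pi.single (1 : Fin 3) (1 : ℤ) : Fin 3 → ℤ) 0 = 0 := by simp [Pi.single_apply]
  have s12 : (Pi.single (1 : Fin 3) (1 : ℤ) : Fin 3 → ℤ) 2 = 0 := by simp [Pi.single_apply]
  have s20 : (Pi.single (2 : Fin 3) (1 : ℤ) : Fin 3 → ℤ) 0 = 0 := by simp [Pi.single_apply]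
  have s21 : (Pi.single (2 : Fin 3) (1 : ℤ) : Fin 3 → ℤ) 1 = 0 := by simp [Pi.single_apply]
  simp only [toAdd_mul, toAdd_pow, toAdd_ofAdd, Pi.add_apply, Pi.smul_apply,
    Pi.single_eq_same, s01, s02, s10, s12, s20, s21] at h0 h1 h2
  simp only [smul_eq_mul, nsmul_eq_mul, mul_zero, mul_one, add_zero, zero_add] at h0 h1 h2
  have e0 : (α : ℤ) * (n 0) = (α : ℤ) * (n' 0) := by push_cast at h0 ⊢; linear_combination h0
  have e1 : (β : ℤ) * (n 1) = (β : ℤ) * (n' 1) := by push_cast at h1 ⊢; linear_combination h1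
  have e2 : (γ : ℤ) * (n 2) = (γ : ℤ) * (n' 2) := by push_cast at h2 ⊢; linear_combination h2
  apply hnn
  have f0 : n 0 = n' 0 := by
    have := mul_left_cancel₀ (a := (α : ℤ)) (by exact_mod_cast hα1.ne') e0
    exact_mod_cast this
  have f1 : n 1 = n' 1 := by
    have := mul_left_cancel₀ (a := (β : ℤ)) (by exact_mod_cast hβ1.ne') e1
    exact_mod_cast this
  have f2 : n 2 = n' 2 := by
    have := mul_left_cancel₀ (a := (γ : ℤ)) (by exact_mod_cast hγ1.ne') e2
    exact_mod_cast this
  funext t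
  fin_cases t
  · exact f0
  · exact f1
  · exact f2
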